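/- Let q be a prime power and n > 1 odd. The number of self-conjugate-reciprocal monic irreducible polynomials of degree n over F_{q^2} equals (1/n)·∑_{d | n} μ(d)·q^{n/d}, where μ is the Möbius function. -/

import Mathlib

open Polynomial IntermediateField

namespace SCR18

set_option linter.unusedSectionVars false

variable {p e : ℕ} [Fact p.Prime] {K : Type*} [Field K] [Fintype K] [CharP K p]

theorem pow_card_eq (hK : Fintype.card K = (p ^ e) ^ 2) (a : K) : a ^ (p ^ e) ^ 2 = a := by
  rw [← hK]; exact FiniteField.pow_card a

theorem pow_card_pow_eq (hK : Fintype.card K = (p ^ e) ^ 2) (a : K) (s : ℕ) :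
    a ^ ((p ^ e) ^ 2) ^ s = a := by
  induction s with
  | zero => simp
  | succ s ih => rw [pow_succ, pow_mul, ih, pow_card_eq hK]

theorem map_frob2 (hK : Fintype.card K = (p ^ e) ^ 2) (f : K[X]) :
    f.map (iterateFrobenius K p (e * 2)) = f := by
  ext k
  rw [coeff_map, iterateFrobenius_def, pow_mul, pow_card_eq hK]

theorem aeval_pow_root (f : K[X]) (α : AlgebraicClosure K) (h : aeval α f = 0) :
    aeval (α ^ p ^ e) (f.map (iterateFrobenius K p e)) = 0 := by
  have hcomp : (algebraMap K (AlgebraicClosure K)).comp (iterateFrobenius K p e)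
      = (iterateFrobenius (AlgebraicClosure K) p e).comp (algebraMap K (AlgebraicClosure K)) := by
    ext a
    simp [iterateFrobenius_def, map_pow]
  rw [aeval_def] at h ⊢
  rw [eval₂_map, hcomp, ← iterateFrobenius_def, ← hom_eval₂, h, map_zero]

theorem aeval_Q_root (hK : Fintype.card K = (p ^ e) ^ 2) (f : K[X]) (α : AlgebraicClosure K)
    (h : aeval α f = 0) : aeval (α ^ (p ^ e) ^ 2) f = 0 := by
  have h1 := aeval_pow_root (p := p) (e := e) (f.map (iterateFrobenius K p e)) (α ^ p ^ e)
    (aeval_pow_root f α h)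
  rw [Polynomial.map_map, ← iterateFrobenius_add] at h1
  have he2 : e + e = e * 2 := by ring
  rw [he2, map_frob2 hK, ← pow_mul, ← sq] at h1
  exact h1

theorem aeval_Q_pow_root (hK : Fintype.card K = (p ^ e) ^ 2) (f : K[X]) (α : AlgebraicClosure K)
    (h : aeval α f = 0) (i : ℕ) : aeval (α ^ (((p ^ e) ^ 2) ^ i)) f = 0 := by
  induction i with
  | zero => simpa using h
  | succ i ih =>
    rw [pow_succ, pow_mul]
    exact aeval_Q_root hK f _ ih

theorem pow_pow_odd {M : Type*} [Monoid M] (x : M) (r : ℕ) {k : ℕ} (h : x ^ (r * r) = x)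
    (hk : Odd k) : x ^ r ^ k = x ^ r := by
  obtain ⟨j, rfl⟩ := hk
  induction j with
  | zero => simp
  | succ j ih =>
    have : 2 * (j + 1) + 1 = 2 + (2 * j + 1) := by ring
    rw [this, pow_add, pow_mul, sq, h, ih]

theorem minpoly_natDegree_dvd_iff (he : 0 < e) (hK : Fintype.card K = (p ^ e) ^ 2)
    (α : AlgebraicClosure K) (s : ℕ) :
    (minpoly K α).natDegree ∣ s ↔ α ^ (((p ^ e) ^ 2) ^ s) = α := by
  have hp1 : 1 < p := (Fact.out : p.Prime).one_lt
  have hq1 : 1 < p ^ e := Nat.one_lt_pow he.ne' hp1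
  have hQ1 : 1 < (p ^ e) ^ 2 := Nat.one_lt_pow (by norm_num) hq1
  have hint : IsIntegral K α := Algebra.IsIntegral.isIntegral α
  constructor
  · -- degree divides s → fixed
    rintro ⟨t, rfl⟩
    -- first: fixed by Q^(natDegree)
    set m := (minpoly K α).natDegree with hm
    have hfix : α ^ (((p ^ e) ^ 2) ^ m) = α := by
      haveI : FiniteDimensional K K⟮α⟯ := IntermediateField.adjoin.finiteDimensional hint
      haveI : Finite K⟮α⟯ := Module.finite_of_finite K
      letI : Fintype K⟮α⟯ := Fintype.ofFinite _
      have hcard : Fintype.card K⟮α⟯ = ((p ^ e) ^ 2) ^ m := by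
        rw [Module.card_eq_pow_finrank (K := K) (V := K⟮α⟯), hK, IntermediateField.adjoin.finrank hint]
      have := FiniteField.pow_card (IntermediateField.AdjoinSimple.gen K α)
      rw [hcard] at this
      have := congrArg (algebraMap K⟮α⟯ (AlgebraicClosure K)) this
      rwa [map_pow] at this
    -- iterate
    clear_value m
    induction t with
    | zero => simp
    | succ t ih => rw [Nat.mul_succ, pow_add, pow_mul, ih, hfix]
  · -- fixed → degree divides s
    intro hα
    rcases Nat.eq_zero_or_pos s with rfl | hs
    · exact dvd_zero _
    set N := ((p ^ e) ^ 2) ^ s with hN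
    have hN1 : 1 < N := Nat.one_lt_pow hs.ne' hQ1
    have hNp : N = p ^ (e * 2 * s) := by
      rw [hN, ← pow_mul, ← pow_mul, mul_assoc]
    have hpN : p ∣ N := by
      rw [hNp]
      exact dvd_pow_self p (by positivity)
    letI : ExpChar (AlgebraicClosure K) p := inferInstance
    have hψ : ∀ x : AlgebraicClosure K, iterateFrobenius (AlgebraicClosure K) p (e * 2 * s) x = x ^ N := by
      intro x; rw [iterateFrobenius_def, ← hNp]
    -- the subfield of N-th power fixed points
    let F : Subfield (AlgebraicClosure K) :=
      { carrier := {x | x ^ N = x}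
        mul_mem' := fun {a b} ha hb => by
          simp only [Set.mem_setOf_eq] at *; rw [mul_pow, ha, hb]
        one_mem' := by simp
        add_mem' := fun {a b} ha hb => by
          simp only [Set.mem_setOf_eq] at *
          rw [← hψ, map_add, hψ, hψ, ha, hb]
        zero_mem' := by simp [zero_pow (by omega : N ≠ 0)]
        neg_mem' := fun {a} ha => by
          simp only [Set.mem_setOf_eq] at *
          rw [← hψ, map_neg, hψ, ha]
        inv_mem' := fun a ha => by
          simp only [Set.mem_setOf_eq] at *
          rw [← hψ, map_inv₀, hψ, ha] }
    have hmemF : ∀ x : AlgebraicClosure K, x ∈ F ↔ x ^ N = x := fun _ => Iff.rfl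
    let E : IntermediateField K (AlgebraicClosure K) := F.toIntermediateField (by
      intro a
      rw [hmemF, ← map_pow]
      congr 1
      rw [hN, pow_card_pow_eq hK])
    -- E equals the root set of X^N - X
    have hEset : (E : Set (AlgebraicClosure K)) = (X ^ N - X : K[X]).rootSet (AlgebraicClosure K) := by
      ext x
      rw [mem_rootSet]
      have hne : (X ^ N - X : K[X]) ≠ 0 := FiniteField.X_pow_card_sub_X_ne_zero K hN1
      simp only [hne, ne_eq, not_false_iff, true_and, map_sub, map_pow, aeval_X, sub_eq_zero]
      exact ⟨fun h => h, fun h => h⟩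
    have hsep : (X ^ N - X : K[X]).Separable := galois_poly_separable p N hpN
    have hsplits : Splits ((X ^ N - X : K[X]).map (algebraMap K (AlgebraicClosure K))) :=
      IsAlgClosed.splits _
    have hfinE : Finite E := by
      have : ((E : Set (AlgebraicClosure K))).Finite := by
        rw [hEset]; exact Set.toFinite _
      exact this.to_subtype
    haveI := hfinE
    haveI : Module.Finite K E := Module.Finite.of_finite
    letI : Fintype E := Fintype.ofFinite _
    have hcardE : Fintype.card E = N := by
      have h1 : Fintype.card E = Fintype.card ((X ^ N - X : K[X]).rootSet (AlgebraicClosure K)) :=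
        Fintype.card_congr (Equiv.setCongr hEset)
      rw [h1, card_rootSet_eq_natDegree hsep hsplits,
        FiniteField.X_pow_card_sub_X_natDegree_eq K hN1]
    have hrank : Module.finrank K E = s := by
      have h2 : Fintype.card E = ((p ^ e) ^ 2) ^ Module.finrank K E := by
        rw [Module.card_eq_pow_finrank (K := K) (V := E), hK]
      rw [hcardE, hN] at h2
      exact (Nat.pow_right_injective hQ1 h2.symm)
    have hαE : α ∈ E := by
      show α ∈ F
      rw [hmemF]; exact hα
    have hdvd : (minpoly K (⟨α, hαE⟩ : E)).natDegree ∣ Module.finrank K E :=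
      minpoly.degree_dvd (IsIntegral.of_finite K _)
    rw [hrank] at hdvd
    have heq : minpoly K (⟨α, hαE⟩ : E) = minpoly K α := by
      have h3 := minpoly.algebraMap_eq (B := E) (B' := AlgebraicClosure K)
        (A := K) (algebraMap E (AlgebraicClosure K)).injective (⟨α, hαE⟩ : E)
      exact h3.symm
    rwa [heq] at hdvd


theorem monic_eq_of_dvd {f g : K[X]} (hf : f.Monic) (hg : g.Monic) (hdvd : g ∣ f)
    (hdeg : f.natDegree = g.natDegree) : f = g := by
  obtain ⟨c, rfl⟩ := hdvd
  have hc : c ≠ 0 := by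
    rintro rfl
    simp only [mul_zero] at hf
    exact (Monic.ne_zero hf) rfl
  have hdc : c.natDegree = 0 := by
    rw [natDegree_mul hg.ne_zero hc] at hdeg
    omega
  obtain ⟨a, rfl⟩ := natDegree_eq_zero.mp hdc
  have : g.leadingCoeff * a = 1 := by
    have := hf
    rw [Monic, leadingCoeff_mul, leadingCoeff_C] at this
    exact this
  rw [hg.leadingCoeff, one_mul] at this
  rw [this, C_1, mul_one]

theorem ncard_pow_eq_one (he : 0 < e) {N : ℕ} (hN0 : 0 < N) (hNp : ¬ p ∣ N) :
    ({x : AlgebraicClosure K | x ^ N = 1}).ncard = N := by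
  have hset : {x : AlgebraicClosure K | x ^ N = 1}
      = (X ^ N - C 1 : K[X]).rootSet (AlgebraicClosure K) := by
    ext x
    rw [mem_rootSet]
    have hne : (X ^ N - C 1 : K[X]) ≠ 0 := X_pow_sub_C_ne_zero hN0 1
    simp only [Set.mem_setOf_eq, map_sub, map_pow, aeval_X, aeval_C, map_one, sub_eq_zero]
    exact ⟨fun h => ⟨hne, h⟩, fun h => h.2⟩
  have hsep : (X ^ N - C 1 : K[X]).Separable := by
    refine separable_X_pow_sub_C 1 ?_ one_ne_zero
    rwa [ne_eq, CharP.cast_eq_zero_iff K p N]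
  rw [hset, ← Nat.card_coe_set_eq, Nat.card_eq_fintype_card,
    card_rootSet_eq_natDegree hsep (IsAlgClosed.splits _), natDegree_X_pow_sub_C]

theorem ncard_rootSet (f : K[X]) (hirr : Irreducible f) :
    (f.rootSet (AlgebraicClosure K)).ncard = f.natDegree := by
  rw [← Nat.card_coe_set_eq, Nat.card_eq_fintype_card,
    card_rootSet_eq_natDegree (PerfectField.separable_of_irreducible hirr)
      (IsAlgClosed.splits _)]

theorem lhs_monic {f : K[X]} (hmonic : f.Monic) (h0 : f.coeff 0 ≠ 0) :
    (C (f.coeff 0)⁻¹ * f.reverse).Monic ∧ (C (f.coeff 0)⁻¹ * f.reverse).natDegree = f.natDegree := by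
  have htd : f.natTrailingDegree = 0 := natTrailingDegree_eq_zero_of_constantCoeff_ne_zero h0
  have htc : f.trailingCoeff = f.coeff 0 := by
    rw [trailingCoeff, htd]
  have hrev0 : f.reverse ≠ 0 := by
    simp [reverse_eq_zero, hmonic.ne_zero]
  constructor
  · rw [Monic, leadingCoeff_mul, leadingCoeff_C, reverse_leadingCoeff, htc,
      inv_mul_cancel₀ h0]
  · rw [natDegree_mul (by simp [h0]) hrev0, natDegree_C, zero_add, reverse_natDegree, htd,
      Nat.sub_zero]


theorem units_pow_eq_one {β : AlgebraicClosure K} (h0 : β ≠ 0) (k : ℕ) :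
    (Units.mk0 β h0) ^ k = 1 ↔ β ^ k = 1 := by
  rw [Units.ext_iff]
  simp

theorem units_pow_eq_pow {β : AlgebraicClosure K} (h0 : β ≠ 0) (k l : ℕ) :
    (Units.mk0 β h0) ^ k = (Units.mk0 β h0) ^ l ↔ β ^ k = β ^ l := by
  rw [Units.ext_iff]
  simp

theorem scr_root_pow (he : 0 < e) (hK : Fintype.card K = (p ^ e) ^ 2) {n : ℕ} (hn : 1 < n)
    {f : K[X]} (hmonic : f.Monic) (hirr : Irreducible f) (hdeg : f.natDegree = n)
    (h0 : f.coeff 0 ≠ 0)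
    (hscr : C (f.coeff 0)⁻¹ * f.reverse = f.map (iterateFrobenius K p e))
    (β : AlgebraicClosure K) (hβ : aeval β f = 0) : β ^ ((p ^ e) ^ n + 1) = 1 := by
  classical
  have hp1 : 1 < p := (Fact.out : p.Prime).one_lt
  have hq1 : 1 < p ^ e := Nat.one_lt_pow he.ne' hp1
  have hmin : minpoly K β = f := (minpoly.eq_of_irreducible_of_monic hirr hβ hmonic).symm
  have hβ0 : β ≠ 0 := by
    rintro rfl
    rw [aeval_def, eval₂_at_zero] at hβ
    exact h0 ((map_eq_zero_iff _ (algebraMap K (AlgebraicClosure K)).injective).mp hβ)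
  have hdegβ : (minpoly K β).natDegree = n := by rw [hmin, hdeg]
  have hfne : f ≠ 0 := hmonic.ne_zero
  set Rfin : Finset (AlgebraicClosure K) := (f.rootSet (AlgebraicClosure K)).toFinset with hR
  have hRcard : Rfin.card = n := by
    rw [hR, Set.toFinset_card, ← Nat.card_eq_fintype_card, Nat.card_coe_set_eq,
      ncard_rootSet f hirr, hdeg]
  have hmemR : ∀ x, x ∈ Rfin ↔ aeval x f = 0 := by
    intro x
    rw [hR, Set.mem_toFinset, mem_rootSet]
    exact ⟨fun h => h.2, fun h => ⟨hfne, h⟩⟩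
  set orb : Finset (AlgebraicClosure K) :=
    (Finset.range n).image (fun i => β ^ (((p ^ e) ^ 2) ^ i)) with horb
  have hsub : orb ⊆ Rfin := by
    intro x hx
    rw [horb, Finset.mem_image] at hx
    obtain ⟨i, _, rfl⟩ := hx
    rw [hmemR]
    exact aeval_Q_pow_root hK f β hβ i
  have hQpow : ∀ i : ℕ, ((p ^ e) ^ 2) ^ i = p ^ (e * 2 * i) := by
    intro i
    rw [← pow_mul, ← pow_mul]
    congr 1
    ring
  have hstep : ∀ i j : ℕ, i < j → j < n → β ^ (((p ^ e) ^ 2) ^ i) ≠ β ^ (((p ^ e) ^ 2) ^ j) := by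
    intro i j hij hjn hne
    have hcancel : β ^ (((p ^ e) ^ 2) ^ (j - i)) = β := by
      letI : ExpChar (AlgebraicClosure K) p := inferInstance
      have hinj2 := (iterateFrobenius (AlgebraicClosure K) p (e * 2 * i)).injective
      apply hinj2
      rw [iterateFrobenius_def, iterateFrobenius_def, ← hQpow]
      rw [← pow_mul, ← pow_add, show j - i + i = j by omega]
      exact hne.symm
    have hdvd : n ∣ j - i := by
      rw [← hdegβ]
      exact (minpoly_natDegree_dvd_iff he hK β (j - i)).mpr hcancel
    have : j - i = 0 := by
      rcases Nat.eq_zero_or_pos (j - i) with h | h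
      · exact h
      · exact absurd (Nat.le_of_dvd h hdvd) (by omega)
    omega
  have hinj : Set.InjOn (fun i => β ^ (((p ^ e) ^ 2) ^ i)) (Finset.range n) := by
    intro i hi j hj hij
    simp only [Finset.coe_range, Set.mem_Iio] at hi hj
    by_contra hne
    rcases Nat.lt_or_ge i j with h | h
    · exact hstep i j h hj hij
    · exact hstep j i (by omega) hi hij.symm
  have hcard_orb : orb.card = n := by
    rw [horb, Finset.card_image_of_injOn hinj, Finset.card_range]
  have horbR : orb = Rfin := Finset.eq_of_subset_of_card_le hsub (by rw [hRcard, hcard_orb])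
  -- (β^q)⁻¹ is a root of f
  have hroot1 : aeval (β ^ p ^ e) (f.map (iterateFrobenius K p e)) = 0 := aeval_pow_root f β hβ
  rw [← hscr] at hroot1
  have hrev : aeval (β ^ p ^ e) f.reverse = 0 := by
    rw [map_mul, aeval_C] at hroot1
    rcases mul_eq_zero.mp hroot1 with h | h
    · exfalso
      exact (map_ne_zero_iff _ (algebraMap K (AlgebraicClosure K)).injective).mpr
        (inv_ne_zero h0) h
    · exact h
  have hbq0 : β ^ p ^ e ≠ 0 := pow_ne_zero _ hβ0
  have hδ : aeval ((β ^ p ^ e)⁻¹) f = 0 := by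
    letI : Invertible ((β ^ p ^ e)⁻¹) := invertibleOfNonzero (inv_ne_zero hbq0)
    have hinvOf : ⅟((β ^ p ^ e)⁻¹) = β ^ p ^ e := by
      rw [invOf_eq_inv, inv_inv]
    rw [aeval_def]
    refine (eval₂_reverse_eq_zero_iff (algebraMap K (AlgebraicClosure K))
      ((β ^ p ^ e)⁻¹) f).mp ?_
    rw [hinvOf]
    rw [aeval_def] at hrev
    exact hrev
  have hmem : (β ^ p ^ e)⁻¹ ∈ Rfin := (hmemR _).mpr hδ
  rw [← horbR, horb, Finset.mem_image] at hmem
  obtain ⟨i, hi, hiq⟩ := hmem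
  rw [Finset.mem_range] at hi
  -- units
  set u : (AlgebraicClosure K)ˣ := Units.mk0 β hβ0 with hu
  have h1 : β ^ (((p ^ e) ^ 2) ^ i + p ^ e) = 1 := by
    rw [pow_add, hiq, inv_mul_cancel₀ hbq0]
  have hu1 : u ^ (((p ^ e) ^ 2) ^ i + p ^ e) = 1 := (units_pow_eq_one hβ0 _).mpr h1
  have hβQn : β ^ (((p ^ e) ^ 2) ^ n) = β :=
    (minpoly_natDegree_dvd_iff he hK β n).mp (by rw [hdegβ])
  have hQn1 : u ^ (((p ^ e) ^ 2) ^ n - 1) = 1 := by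
    have hpos : 0 < ((p ^ e) ^ 2) ^ n := by positivity
    have huQ : u ^ (((p ^ e) ^ 2) ^ n) = u := by
      have h5 := (units_pow_eq_pow hβ0 (((p ^ e) ^ 2) ^ n) 1).mpr (by rw [pow_one]; exact hβQn)
      rwa [pow_one] at h5
    have h2 : u ^ (((p ^ e) ^ 2) ^ n - 1) * u = 1 * u := by
      rw [one_mul, ← pow_succ, Nat.sub_add_cancel hpos]
      exact huQ
    exact mul_right_cancel h2
  have hordQ : orderOf u ∣ ((p ^ e) ^ 2) ^ n - 1 := orderOf_dvd_of_pow_eq_one hQn1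
  have hpnd : ¬ p ∣ ((p ^ e) ^ 2) ^ n - 1 := by
    intro hdvd'
    have hp2 : p ∣ ((p ^ e) ^ 2) ^ n := by
      rw [hQpow]
      exact dvd_pow_self p (by positivity)
    have h11 : p ∣ 1 := by
      have := Nat.dvd_sub hp2 hdvd'
      have hE : ((p ^ e) ^ 2) ^ n - (((p ^ e) ^ 2) ^ n - 1) = 1 := by
        have : 0 < ((p ^ e) ^ 2) ^ n := by positivity
        omega
      rwa [hE] at this
    exact absurd (Nat.dvd_one.mp h11) (by omega)
  have hcop : (orderOf u).Coprime (p ^ e) := by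
    have hnp : ¬ p ∣ orderOf u := fun hc => hpnd (hc.trans hordQ)
    have : Nat.Coprime p (orderOf u) :=
      (Nat.Prime.coprime_iff_not_dvd (Fact.out)).mpr hnp
    exact (Nat.Coprime.pow_left e this).symm
  -- find odd a with u^(q^a+1)=1
  have hord : ∃ a, Odd a ∧ u ^ ((p ^ e) ^ a + 1) = 1 := by
    rcases Nat.eq_zero_or_pos i with rfl | hi0
    · refine ⟨1, odd_one, ?_⟩
      have hE : ((p ^ e) ^ 2) ^ 0 + p ^ e = (p ^ e) ^ 1 + 1 := by
        rw [pow_zero, pow_one]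
        omega
      rwa [hE] at hu1
    · refine ⟨2 * i - 1, Nat.Even.sub_odd (by omega) (even_two_mul i) odd_one, ?_⟩
      have hexp : ((p ^ e) ^ 2) ^ i + p ^ e = p ^ e * ((p ^ e) ^ (2 * i - 1) + 1) := by
        have h1 : ((p ^ e) ^ 2) ^ i = p ^ e * (p ^ e) ^ (2 * i - 1) := by
          rw [← pow_mul, ← pow_succ']
          congr 1
          omega
        rw [h1, mul_add, mul_one]
      rw [hexp] at hu1
      have hdvd : orderOf u ∣ p ^ e * ((p ^ e) ^ (2 * i - 1) + 1) := orderOf_dvd_of_pow_eq_one hu1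
      exact orderOf_dvd_iff_pow_eq_one.mp (hcop.dvd_of_dvd_mul_left hdvd)
  obtain ⟨a, ha_odd, hua⟩ := hord
  have hua' : u ^ ((p ^ e) ^ a) = u⁻¹ := by
    have := hua
    rw [pow_add, pow_one] at this
    exact eq_inv_of_mul_eq_one_left this
  have hfix2 : u ^ ((p ^ e) ^ a * (p ^ e) ^ a) = u := by
    rw [pow_mul, hua', inv_pow, hua', inv_inv]
  have hβfix2 : β ^ (((p ^ e) ^ 2) ^ a) = β := by
    have hE : ((p ^ e) ^ 2) ^ a = (p ^ e) ^ a * (p ^ e) ^ a := by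
      calc ((p ^ e) ^ 2) ^ a = (p ^ e) ^ (2 * a) := (pow_mul (p ^ e) 2 a).symm
      _ = (p ^ e) ^ (a + a) := by rw [two_mul]
      _ = (p ^ e) ^ a * (p ^ e) ^ a := pow_add _ _ _
    rw [hE]
    have := (units_pow_eq_pow hβ0 ((p ^ e) ^ a * (p ^ e) ^ a) 1).mp
      (by rw [pow_one]; exact hfix2)
    rwa [pow_one] at this
  have hna : n ∣ a := by
    rw [← hdegβ]
    exact (minpoly_natDegree_dvd_iff he hK β a).mpr hβfix2
  obtain ⟨k, rfl⟩ := hna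
  have hk_odd : Odd k := (Nat.odd_mul.mp ha_odd).2
  have hfixn : u ^ ((p ^ e) ^ n * (p ^ e) ^ n) = u := by
    have hE : (p ^ e) ^ n * (p ^ e) ^ n = ((p ^ e) ^ 2) ^ n := by
      calc (p ^ e) ^ n * (p ^ e) ^ n = (p ^ e) ^ (n + n) := (pow_add _ _ _).symm
      _ = (p ^ e) ^ (2 * n) := by rw [two_mul]
      _ = ((p ^ e) ^ 2) ^ n := pow_mul (p ^ e) 2 n
    rw [hE]
    have := (units_pow_eq_pow hβ0 (((p ^ e) ^ 2) ^ n) 1).mpr (by rw [pow_one]; exact hβQn)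
    rwa [pow_one] at this
  have hk := pow_pow_odd u ((p ^ e) ^ n) hfixn hk_odd
  have hfinal : u ^ ((p ^ e) ^ n + 1) = 1 := by
    calc u ^ ((p ^ e) ^ n + 1) = u ^ ((p ^ e) ^ n) * u := by rw [pow_add, pow_one]
    _ = u ^ (((p ^ e) ^ n) ^ k) * u := by rw [hk]
    _ = u ^ ((p ^ e) ^ (n * k)) * u := by rw [← pow_mul]
    _ = u ^ ((p ^ e) ^ (n * k) + 1) := by rw [pow_add, pow_one]
    _ = 1 := hua
  exact (units_pow_eq_one hβ0 _).mp hfinal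


theorem minpoly_scr (he : 0 < e) (hK : Fintype.card K = (p ^ e) ^ 2) {n : ℕ} (hn : 1 < n)
    (hodd : Odd n) (α : AlgebraicClosure K) (hα : α ^ ((p ^ e) ^ n + 1) = 1)
    (hdegα : (minpoly K α).natDegree = n) :
    C ((minpoly K α).coeff 0)⁻¹ * (minpoly K α).reverse
      = (minpoly K α).map (iterateFrobenius K p e) := by
  have hα0 : α ≠ 0 := by
    rintro rfl
    rw [zero_pow (by positivity)] at hα
    exact zero_ne_one hα
  have hint : IsIntegral K α := Algebra.IsIntegral.isIntegral α
  set f := minpoly K α with hf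
  have hmonic : f.Monic := minpoly.monic hint
  have hirr : Irreducible f := minpoly.irreducible hint
  have h0 : f.coeff 0 ≠ 0 := minpoly.coeff_zero_ne_zero hint hα0
  have hroot : aeval α f = 0 := minpoly.aeval K α
  have hinv : α ^ ((p ^ e) ^ n) = α⁻¹ := by
    have h2 := hα
    rw [pow_add, pow_one] at h2
    exact eq_inv_of_mul_eq_one_left h2
  have hβroot : aeval (α ^ (((p ^ e) ^ 2) ^ ((n - 1) / 2))) f = 0 := aeval_Q_pow_root hK f α hroot _
  have hmap : aeval (α ^ ((p ^ e) ^ n)) (f.map (iterateFrobenius K p e)) = 0 := by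
    have h2 := aeval_pow_root (p := p) (e := e) f _ hβroot
    rw [← pow_mul] at h2
    have hE : ((p ^ e) ^ 2) ^ ((n - 1) / 2) * p ^ e = (p ^ e) ^ n := by
      rw [← pow_mul]
      have hev : 2 * ((n - 1) / 2) = n - 1 := by
        obtain ⟨m, hm⟩ := hodd
        omega
      rw [hev, ← pow_succ]
      congr 1
      omega
    rw [hE] at h2
    exact h2
  rw [hinv] at hmap
  have hbij : Function.Bijective (iterateFrobenius K p e) :=
    Finite.injective_iff_bijective.mp (iterateFrobenius K p e).injective
  have hgmonic : (f.map (iterateFrobenius K p e)).Monic := hmonic.map _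
  have hgirr : Irreducible (f.map (iterateFrobenius K p e)) := by
    set φe := RingEquiv.ofBijective (iterateFrobenius K p e) hbij with hφe
    have hcomp : (φe.symm : K ≃+* K).toRingHom.comp (iterateFrobenius K p e) = RingHom.id K := by
      ext a
      exact φe.symm_apply_apply a
    apply Monic.irreducible_of_irreducible_map ((φe.symm : K ≃+* K) : K →+* K) _ hgmonic
    rw [Polynomial.map_map]
    rw [show ((φe.symm : K ≃+* K) : K →+* K).comp (iterateFrobenius K p e) = RingHom.id K from hcomp]
    rw [Polynomial.map_id]
    exact hirr
  have hintinv : IsIntegral K α⁻¹ := Algebra.IsIntegral.isIntegral α⁻¹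
  have hgmin : f.map (iterateFrobenius K p e) = minpoly K α⁻¹ :=
    minpoly.eq_of_irreducible_of_monic hgirr hmap hgmonic
  have hdeg' : (minpoly K α⁻¹).natDegree = n := by
    rw [← hgmin, natDegree_map, hdegα]
  obtain ⟨hLm, hLdeg⟩ := lhs_monic hmonic h0
  have hLroot : aeval α⁻¹ (C (f.coeff 0)⁻¹ * f.reverse) = 0 := by
    rw [map_mul, aeval_C]
    apply mul_eq_zero_of_right
    letI : Invertible α := invertibleOfNonzero hα0
    have hiα : ⅟α = α⁻¹ := invOf_eq_inv α
    rw [aeval_def, ← hiα]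
    refine (eval₂_reverse_eq_zero_iff (algebraMap K (AlgebraicClosure K)) α f).mpr ?_
    rw [← aeval_def]
    exact hroot
  have hdvd : minpoly K α⁻¹ ∣ C (f.coeff 0)⁻¹ * f.reverse := minpoly.dvd K α⁻¹ hLroot
  have hLeq : C (f.coeff 0)⁻¹ * f.reverse = minpoly K α⁻¹ := by
    refine monic_eq_of_dvd hLm (minpoly.monic hintinv) hdvd ?_
    rw [hLdeg, hdeg', hdegα]
  rw [hLeq, hgmin]

theorem mem_Ad_iff (he : 0 < e) (hK : Fintype.card K = (p ^ e) ^ 2) {n d : ℕ} (hn : 1 < n)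
    (hodd : Odd n) (hd : d ∣ n) (hd0 : 0 < d) (α : AlgebraicClosure K) :
    α ^ ((p ^ e) ^ d + 1) = 1
      ↔ (α ^ ((p ^ e) ^ n + 1) = 1 ∧ (minpoly K α).natDegree ∣ d) := by
  have hq1 : 1 < p ^ e := Nat.one_lt_pow he.ne' (Fact.out : p.Prime).one_lt
  obtain ⟨k, hk⟩ := hd
  have hn0 : 0 < n := by omega
  have hk0 : 0 < k := by
    rcases Nat.eq_zero_or_pos k with rfl | h
    · omega
    · exact h
  have hkodd : Odd k := (Nat.odd_mul.mp (hk ▸ hodd)).2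
  have h4 : ((p ^ e) ^ d) ^ k = (p ^ e) ^ n :=
    (pow_mul (p ^ e) d k).symm.trans (congrArg (fun t => (p ^ e) ^ t) hk.symm)
  have hqdq : (p ^ e) ^ d * (p ^ e) ^ d = ((p ^ e) ^ 2) ^ d := by
    calc (p ^ e) ^ d * (p ^ e) ^ d = (p ^ e) ^ (d + d) := (pow_add _ _ _).symm
    _ = (p ^ e) ^ (2 * d) := by rw [two_mul]
    _ = ((p ^ e) ^ 2) ^ d := pow_mul (p ^ e) 2 d
  constructor
  · intro h1
    have hα0 : α ≠ 0 := by
      rintro rfl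
      rw [zero_pow (by positivity)] at h1
      exact zero_ne_one h1
    set u := Units.mk0 α hα0 with hu
    have hu1 : u ^ ((p ^ e) ^ d + 1) = 1 := (units_pow_eq_one hα0 _).mpr h1
    constructor
    · -- q^d + 1 divides q^n + 1
      have hdvd : (p ^ e) ^ d + 1 ∣ (p ^ e) ^ n + 1 := by
        have := Odd.nat_add_dvd_pow_add_pow ((p ^ e) ^ d) 1 hkodd
        rwa [one_pow, h4] at this
      obtain ⟨t, ht⟩ := hdvd
      have : u ^ ((p ^ e) ^ n + 1) = 1 := by
        rw [ht, pow_mul, hu1, one_pow]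
      exact (units_pow_eq_one hα0 _).mp this
    · -- degree divides d
      have hud : u ^ ((p ^ e) ^ d) = u⁻¹ := by
        have h2 := hu1
        rw [pow_add, pow_one] at h2
        exact eq_inv_of_mul_eq_one_left h2
      have hfix : u ^ ((p ^ e) ^ d * (p ^ e) ^ d) = u := by
        rw [pow_mul, hud, inv_pow, hud, inv_inv]
      have hαfix : α ^ (((p ^ e) ^ 2) ^ d) = α := by
        rw [← hqdq]
        have h3 := (units_pow_eq_pow hα0 ((p ^ e) ^ d * (p ^ e) ^ d) 1).mp
          (by rw [pow_one]; exact hfix)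
        rwa [pow_one] at h3
      exact (minpoly_natDegree_dvd_iff he hK α d).mpr hαfix
  · rintro ⟨h1, h2⟩
    have hα0 : α ≠ 0 := by
      rintro rfl
      rw [zero_pow (by positivity)] at h1
      exact zero_ne_one h1
    set u := Units.mk0 α hα0 with hu
    have hu1 : u ^ ((p ^ e) ^ n + 1) = 1 := (units_pow_eq_one hα0 _).mpr h1
    have hαfix : α ^ (((p ^ e) ^ 2) ^ d) = α := (minpoly_natDegree_dvd_iff he hK α d).mp h2
    have hufix : u ^ ((p ^ e) ^ d * (p ^ e) ^ d) = u := by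
      rw [hqdq]
      have h3 := (units_pow_eq_pow hα0 (((p ^ e) ^ 2) ^ d) 1).mpr (by rw [pow_one]; exact hαfix)
      rwa [pow_one] at h3
    have hodd_pow := pow_pow_odd u ((p ^ e) ^ d) hufix hkodd
    have : u ^ ((p ^ e) ^ d + 1) = 1 := by
      calc u ^ ((p ^ e) ^ d + 1) = u ^ ((p ^ e) ^ d) * u := by rw [pow_add, pow_one]
      _ = u ^ (((p ^ e) ^ d) ^ k) * u := by rw [hodd_pow]
      _ = u ^ ((p ^ e) ^ n) * u := by rw [h4]
      _ = u ^ ((p ^ e) ^ n + 1) := by rw [pow_add, pow_one]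
      _ = 1 := hu1
    exact (units_pow_eq_one hα0 _).mp this



theorem pow_one_finite {N : ℕ} (hN0 : 0 < N) :
    ({x : AlgebraicClosure K | x ^ N = 1}).Finite := by
  have hsub : {x : AlgebraicClosure K | x ^ N = 1}
      ⊆ (X ^ N - C 1 : K[X]).rootSet (AlgebraicClosure K) := by
    intro x hx
    rw [mem_rootSet]
    refine ⟨X_pow_sub_C_ne_zero hN0 1, ?_⟩
    simp only [Set.mem_setOf_eq] at hx
    simp [hx, sub_eq_zero]
  exact (Set.toFinite _).subset hsub

theorem sum_ncard_eq (he : 0 < e) (hK : Fintype.card K = (p ^ e) ^ 2) {n : ℕ} (hn : 1 < n)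
    (hodd : Odd n) {d : ℕ} (hd : d ∣ n) (hd0 : 0 < d) :
    ∑ c ∈ d.divisors,
        ({α : AlgebraicClosure K | α ^ ((p ^ e) ^ n + 1) = 1
          ∧ (minpoly K α).natDegree = c}).ncard
      = (p ^ e) ^ d + 1 := by
  classical
  have hp1 : 1 < p := (Fact.out : p.Prime).one_lt
  have hpd : ¬ p ∣ (p ^ e) ^ d + 1 := by
    intro h
    have h2 : p ∣ (p ^ e) ^ d := dvd_pow (dvd_pow_self p he.ne') hd0.ne'
    have h3 := Nat.dvd_sub h h2
    rw [Nat.add_sub_cancel_left] at h3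
    have := Nat.dvd_one.mp h3
    omega
  have hA : ({α : AlgebraicClosure K | α ^ ((p ^ e) ^ d + 1) = 1}).Finite :=
    pow_one_finite (by positivity)
  set FA := hA.toFinset with hFA
  have hcardFA : FA.card = (p ^ e) ^ d + 1 := by
    rw [hFA, ← Set.ncard_eq_toFinset_card _ hA, ncard_pow_eq_one he (by positivity) hpd]
  have hmapsto : ∀ α ∈ FA, (minpoly K α).natDegree ∈ d.divisors := by
    intro α hα
    rw [hFA, Set.Finite.mem_toFinset] at hα
    rw [Nat.mem_divisors]
    exact ⟨((mem_Ad_iff he hK hn hodd hd hd0 α).mp hα).2, hd0.ne'⟩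
  have hfib := Finset.card_eq_sum_card_fiberwise hmapsto
  have hTc : ∀ c ∈ d.divisors,
      ({α : AlgebraicClosure K | α ^ ((p ^ e) ^ n + 1) = 1
        ∧ (minpoly K α).natDegree = c}).ncard
        = (FA.filter (fun α => (minpoly K α).natDegree = c)).card := by
    intro c hc
    obtain ⟨hcd, _⟩ := Nat.mem_divisors.mp hc
    have hTfin : ({α : AlgebraicClosure K | α ^ ((p ^ e) ^ n + 1) = 1
        ∧ (minpoly K α).natDegree = c}).Finite :=
      (pow_one_finite (by positivity)).subset (fun α hα => hα.1)
    rw [Set.ncard_eq_toFinset_card _ hTfin]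
    congr 1
    ext α
    rw [Set.Finite.mem_toFinset, Finset.mem_filter, hFA, Set.Finite.mem_toFinset]
    simp only [Set.mem_setOf_eq]
    constructor
    · rintro ⟨h1, h2⟩
      exact ⟨(mem_Ad_iff he hK hn hodd hd hd0 α).mpr ⟨h1, by rw [h2]; exact hcd⟩, h2⟩
    · rintro ⟨h1, h2⟩
      exact ⟨((mem_Ad_iff he hK hn hodd hd hd0 α).mp h1).1, h2⟩
  rw [Finset.sum_congr rfl hTc, ← hfib, hcardFA]


theorem moebius_sum_zero {n : ℕ} (h : 1 < n) :
    ∑ d ∈ n.divisors, ArithmeticFunction.moebius d = 0 := by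
  have h2 := congrArg (fun f : ArithmeticFunction ℤ => f n) ArithmeticFunction.moebius_mul_coe_zeta
  simp only [ArithmeticFunction.mul_apply, ArithmeticFunction.natCoe_apply] at h2
  rw [Nat.sum_divisorsAntidiagonal
    (f := fun a b => ArithmeticFunction.moebius a * (ArithmeticFunction.zeta b : ℤ))] at h2
  have hc : ∀ d ∈ n.divisors,
      ArithmeticFunction.moebius d * ((ArithmeticFunction.zeta (n / d) : ℕ) : ℤ)
        = ArithmeticFunction.moebius d := by
    intro d hd
    have h1 : d ∣ n := Nat.dvd_of_mem_divisors hd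
    have h5 : n / d ≠ 0 := by
      have h6 := Nat.div_mul_cancel h1
      intro h0
      rw [h0] at h6
      simp at h6
      omega
    simp [ArithmeticFunction.zeta_apply, h5]
  rw [Finset.sum_congr rfl hc] at h2
  rw [h2]
  simp [ArithmeticFunction.one_apply, Nat.ne_of_gt h]

theorem Tn_ncard (he : 0 < e) (hK : Fintype.card K = (p ^ e) ^ 2) {n : ℕ} (hn : 1 < n)
    (hodd : Odd n) :
    (({α : AlgebraicClosure K | α ^ ((p ^ e) ^ n + 1) = 1
        ∧ (minpoly K α).natDegree = n}).ncard : ℤ)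
      = ∑ d ∈ n.divisors,
          ArithmeticFunction.moebius d * ((p ^ e : ℕ) : ℤ) ^ (n / d) := by
  classical
  set g : ℕ → ℤ := fun c => (({α : AlgebraicClosure K | α ^ ((p ^ e) ^ n + 1) = 1
      ∧ (minpoly K α).natDegree = c}).ncard : ℤ) with hg
  set G : ℕ → ℤ := fun d => ((p ^ e : ℕ) : ℤ) ^ d + 1 with hG
  have hforward : ∀ m, 0 < m → m ∈ {m : ℕ | m ∣ n} → (∑ i ∈ m.divisors, g i) = G m := by
    intro m hm0 hmdvd
    have h1 := sum_ncard_eq he hK hn hodd hmdvd hm0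
    have h2 := congrArg (fun t : ℕ => (t : ℤ)) h1
    simp only [Nat.cast_sum, Nat.cast_add, Nat.cast_pow, Nat.cast_one] at h2
    rw [hg, hG]
    push_cast
    exact h2
  have hmoeb := (ArithmeticFunction.sum_eq_iff_sum_smul_moebius_eq_on {m : ℕ | m ∣ n}
      (fun a b hab hb => hab.trans hb)).mp hforward n (by omega) (dvd_refl n)
  rw [Nat.sum_divisorsAntidiagonal
    (f := fun a b => ArithmeticFunction.moebius a • G b)] at hmoeb
  have hsplit : ∀ d ∈ n.divisors, ArithmeticFunction.moebius d • G (n / d)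
      = ArithmeticFunction.moebius d * ((p ^ e : ℕ) : ℤ) ^ (n / d)
        + ArithmeticFunction.moebius d := by
    intro d _
    rw [hG]
    simp only [zsmul_eq_mul, Int.cast_id]
    ring
  calc (g n) = ∑ d ∈ n.divisors, (ArithmeticFunction.moebius d * ((p ^ e : ℕ) : ℤ) ^ (n / d)
        + ArithmeticFunction.moebius d) := by rw [← hmoeb, Finset.sum_congr rfl hsplit]
  _ = (∑ d ∈ n.divisors, ArithmeticFunction.moebius d * ((p ^ e : ℕ) : ℤ) ^ (n / d))
        + ∑ d ∈ n.divisors, ArithmeticFunction.moebius d := Finset.sum_add_distrib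
  _ = ∑ d ∈ n.divisors, ArithmeticFunction.moebius d * ((p ^ e : ℕ) : ℤ) ^ (n / d) := by
        rw [moebius_sum_zero hn, add_zero]

end SCR18

open Polynomial

theorem stmt18 (p e : ℕ) [Fact p.Prime] (he : 0 < e)
    (K : Type*) [Field K] [Fintype K] [CharP K p] (hK : Fintype.card K = p ^ (e * 2))
    (n : ℕ) (hn : 1 < n) (hodd : Odd n) :
    (Set.ncard {f : K[X] | f.Monic ∧ Irreducible f ∧ f.natDegree = n ∧ f.coeff 0 ≠ 0 ∧
        C (f.coeff 0)⁻¹ * f.reverse = f.map (iterateFrobenius K p e)} : ℚ) =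
      (1 / (n : ℚ)) * ∑ d ∈ n.divisors,
        (ArithmeticFunction.moebius d : ℚ) * ((p : ℚ) ^ e) ^ (n / d) := by
  classical
  have hK2 : Fintype.card K = (p ^ e) ^ 2 := by rw [hK, pow_mul]
  set S := {f : K[X] | f.Monic ∧ Irreducible f ∧ f.natDegree = n ∧ f.coeff 0 ≠ 0 ∧
      C (f.coeff 0)⁻¹ * f.reverse = f.map (iterateFrobenius K p e)} with hSdef
  set Tn := {α : AlgebraicClosure K | α ^ ((p ^ e) ^ n + 1) = 1
      ∧ (minpoly K α).natDegree = n} with hTndef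
  have hTn_fin : Tn.Finite := (SCR18.pow_one_finite (by positivity)).subset (fun α hα => hα.1)
  have hmapsto : ∀ α ∈ Tn, minpoly K α ∈ S := by
    intro α hα
    obtain ⟨h1, h2⟩ := hα
    have hα0 : α ≠ 0 := by
      rintro rfl
      rw [zero_pow (by positivity)] at h1
      exact zero_ne_one h1
    have hint : IsIntegral K α := Algebra.IsIntegral.isIntegral α
    exact ⟨minpoly.monic hint, minpoly.irreducible hint, h2,
      minpoly.coeff_zero_ne_zero hint hα0, SCR18.minpoly_scr he hK2 hn hodd α h1 h2⟩
  have hfib : ∀ f ∈ S, {α | α ∈ Tn ∧ minpoly K α = f} = f.rootSet (AlgebraicClosure K) := by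
    intro f hf
    obtain ⟨hmon, hirr, hdeg, h0, hscr⟩ := hf
    ext α
    simp only [Set.mem_setOf_eq, mem_rootSet, hmon.ne_zero, ne_eq, not_false_iff, true_and]
    constructor
    · rintro ⟨_, rfl⟩
      exact minpoly.aeval K α
    · intro hroot
      have hmin : minpoly K α = f := (minpoly.eq_of_irreducible_of_monic hirr hroot hmon).symm
      exact ⟨⟨SCR18.scr_root_pow he hK2 hn hmon hirr hdeg h0 hscr α hroot,
        by rw [hmin, hdeg]⟩, hmin⟩
  have hsurj : S ⊆ (fun α => minpoly K α) '' Tn := by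
    intro f hf
    obtain ⟨hmon, hirr, hdeg, h0, hscr⟩ := hf
    have hdeg0 : f.degree ≠ 0 := by
      rw [degree_eq_natDegree hmon.ne_zero, hdeg]
      exact_mod_cast (show n ≠ 0 by omega)
    obtain ⟨α, hroot⟩ := IsAlgClosed.exists_aeval_eq_zero (AlgebraicClosure K) f hdeg0
    have hmin : minpoly K α = f := (minpoly.eq_of_irreducible_of_monic hirr hroot hmon).symm
    exact ⟨α, ⟨SCR18.scr_root_pow he hK2 hn hmon hirr hdeg h0 hscr α hroot,
      by rw [hmin, hdeg]⟩, hmin⟩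
  have hS_fin : S.Finite := (hTn_fin.image _).subset hsurj
  set FT := hTn_fin.toFinset with hFT
  set FS := hS_fin.toFinset with hFS
  have hmaps2 : ∀ α ∈ FT, minpoly K α ∈ FS := by
    intro α hα
    rw [hFT, Set.Finite.mem_toFinset] at hα
    rw [hFS, Set.Finite.mem_toFinset]
    exact hmapsto α hα
  have hcount := Finset.card_eq_sum_card_fiberwise hmaps2
  have hfibcard : ∀ f ∈ FS, (FT.filter (fun α => minpoly K α = f)).card = n := by
    intro f hf
    rw [hFS, Set.Finite.mem_toFinset] at hf
    have hset : ↑(FT.filter (fun α => minpoly K α = f)) = f.rootSet (AlgebraicClosure K) := by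
      rw [← hfib f hf]
      ext α
      simp [hFT, Set.Finite.mem_toFinset]
    have h9 := congrArg Set.ncard hset
    rw [Set.ncard_coe_finset] at h9
    obtain ⟨hmon, hirr, hdeg, h0, hscr⟩ := hf
    rw [h9, SCR18.ncard_rootSet f hirr, hdeg]
  have hcard : FT.card = FS.card * n := by
    rw [hcount, Finset.sum_congr rfl hfibcard, Finset.sum_const, smul_eq_mul]
  have hSn : Tn.ncard = S.ncard * n := by
    rw [Set.ncard_eq_toFinset_card _ hTn_fin, Set.ncard_eq_toFinset_card _ hS_fin]
    exact hcard
  have hmoeb := SCR18.Tn_ncard he hK2 hn hodd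
  have hQ : ((Tn.ncard : ℚ)) = ∑ d ∈ n.divisors,
      (ArithmeticFunction.moebius d : ℚ) * ((p : ℚ) ^ e) ^ (n / d) := by
    have h10 := congrArg (fun t : ℤ => (t : ℚ)) hmoeb
    push_cast at h10
    convert h10 using 2
  have hn0 : (n : ℚ) ≠ 0 := Nat.cast_ne_zero.mpr (by omega)
  rw [← hQ, hSn]
  push_cast
  field_simp
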